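/- The nuclear norm satisfies the triangle inequality: for any two real matrices A and B of the same size, ‖A + B‖_* ≤ ‖A‖_* + ‖B‖_*. -/

import Mathlib

theorem Matrix.isHermitian_transpose_mul_self {m n α : Type*} [Fintype m]
    [NonUnitalCommSemiring α] [StarRing α] [TrivialStar α] (A : Matrix m n α) :
    (A.transpose * A).IsHermitian := by
  simpa [Matrix.conjTranspose_eq_transpose_of_trivial] using
    Matrix.isHermitian_conjTranspose_mul_self A

/-- The nuclear norm of a real matrix `A`: the sum of its singular values, i.e. the sum of the
square roots of the eigenvalues of the positive semidefinite symmetric matrix `Aᵀ * A`. -/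
noncomputable def nuclearNorm {m n : Type*} [Fintype m] [Fintype n] [DecidableEq n]
    (A : Matrix m n ℝ) : ℝ :=
  ∑ i, Real.sqrt ((Matrix.isHermitian_transpose_mul_self A).eigenvalues i)

open Matrix Finset

namespace NuclearAux

variable {m n : Type*} [Fintype m] [Fintype n] [DecidableEq n]

lemma sum_dot {ι k : Type*} [Fintype ι] [Fintype k] (f : ι → k → ℝ) (x : k → ℝ) :
    (∑ i, f i) ⬝ᵥ x = ∑ i, f i ⬝ᵥ x := by
  simp only [dotProduct, Finset.sum_apply, Finset.sum_mul]
  exact Finset.sum_comm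

lemma dot_sum {ι k : Type*} [Fintype ι] [Fintype k] (f : ι → k → ℝ) (x : k → ℝ) :
    x ⬝ᵥ (∑ i, f i) = ∑ i, x ⬝ᵥ f i := by
  simp only [dotProduct, Finset.sum_apply, Finset.mul_sum]
  exact Finset.sum_comm

/-- Bessel-type inequality for a pairwise-orthogonal family with norms at most 1. -/
lemma bessel {ι k : Type*} [Fintype ι] [Fintype k]
    (u : ι → k → ℝ) (horth : ∀ i j, i ≠ j → u i ⬝ᵥ u j = 0)
    (hnorm : ∀ i, u i ⬝ᵥ u i ≤ 1) (x : k → ℝ) :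
    ∑ i, (u i ⬝ᵥ x) ^ 2 ≤ x ⬝ᵥ x := by
  set p : k → ℝ := ∑ i, (u i ⬝ᵥ x) • u i with hp
  have h0 : 0 ≤ (x - p) ⬝ᵥ (x - p) := by
    simp only [dotProduct]
    exact Finset.sum_nonneg fun i _ => mul_self_nonneg _
  have hpx : p ⬝ᵥ x = ∑ i, (u i ⬝ᵥ x) ^ 2 := by
    rw [hp, sum_dot]; simp [smul_dotProduct, sq]
  have hpp : p ⬝ᵥ p ≤ ∑ i, (u i ⬝ᵥ x) ^ 2 := by
    have : p ⬝ᵥ p = ∑ i, (u i ⬝ᵥ x) ^ 2 * (u i ⬝ᵥ u i) := by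
      rw [hp, sum_dot]
      simp only [smul_dotProduct, smul_eq_mul, dot_sum, dotProduct_smul, Finset.mul_sum]
      refine Finset.sum_congr rfl fun i _ => ?_
      rw [Finset.sum_eq_single i]
      · ring
      · intro j _ hj
        rw [horth i j (Ne.symm hj)]; ring
      · intro h; exact absurd (Finset.mem_univ i) h
    rw [this]
    refine Finset.sum_le_sum fun i _ => ?_
    calc (u i ⬝ᵥ x) ^ 2 * (u i ⬝ᵥ u i) ≤ (u i ⬝ᵥ x) ^ 2 * 1 :=
          mul_le_mul_of_nonneg_left (hnorm i) (sq_nonneg _)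
      _ = (u i ⬝ᵥ x) ^ 2 := mul_one _
  have hxp : x ⬝ᵥ p = p ⬝ᵥ x := dotProduct_comm _ _
  have hexp : (x - p) ⬝ᵥ (x - p) = x ⬝ᵥ x - 2 * (p ⬝ᵥ x) + p ⬝ᵥ p := by
    simp [sub_dotProduct, dotProduct_sub, hxp]; ring
  rw [hexp, hpx] at h0
  linarith

/-- The `j`-th eigenvector of `Mᵀ * M`, as a plain vector. -/
noncomputable def ev (M : Matrix m n ℝ) (j : n) : n → ℝ :=
  ⇑((Matrix.isHermitian_transpose_mul_self M).eigenvectorBasis j)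

lemma ev_dot (M : Matrix m n ℝ) (i j : n) :
    ev M i ⬝ᵥ ev M j = if i = j then 1 else 0 := by
  have h := (Matrix.isHermitian_transpose_mul_self M).eigenvectorBasis.orthonormal
  rcases eq_or_ne i j with rfl | hij
  · have h2 : (inner ℝ ((Matrix.isHermitian_transpose_mul_self M).eigenvectorBasis i)
        ((Matrix.isHermitian_transpose_mul_self M).eigenvectorBasis i) : ℝ) = 1 := by
      rw [real_inner_self_eq_norm_sq, h.1 i]; norm_num
    rw [EuclideanSpace.inner_eq_star_dotProduct] at h2
    simpa [ev] using h2
  · have := h.2 hij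
    beta_reduce at this
    rw [EuclideanSpace.inner_eq_star_dotProduct] at this
    simpa [ev, hij, dotProduct_comm] using this

lemma ev_eigen (M : Matrix m n ℝ) (j : n) :
    (Mᵀ * M) *ᵥ ev M j =
      (Matrix.isHermitian_transpose_mul_self M).eigenvalues j • ev M j :=
  (Matrix.isHermitian_transpose_mul_self M).mulVec_eigenvectorBasis j

lemma mulVec_ev_dot (M : Matrix m n ℝ) (i j : n) :
    (M *ᵥ ev M i) ⬝ᵥ (M *ᵥ ev M j) =
      (Matrix.isHermitian_transpose_mul_self M).eigenvalues j *
        (if i = j then 1 else 0) := by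
  have : ev M i ⬝ᵥ ((Mᵀ * M) *ᵥ ev M j) = (M *ᵥ ev M i) ⬝ᵥ (M *ᵥ ev M j) := by
    rw [← mulVec_mulVec, dotProduct_mulVec, vecMul_transpose]
  rw [← this, ev_eigen, dotProduct_smul, smul_eq_mul, ev_dot]

lemma ev_complete (M : Matrix m n ℝ) (x : n → ℝ) :
    x = ∑ j, (ev M j ⬝ᵥ x) • ev M j := by
  have h := ((Matrix.isHermitian_transpose_mul_self M).eigenvectorBasis.sum_repr'
    ((WithLp.equiv 2 (n → ℝ)).symm x)).symm
  calc x = (WithLp.equiv 2 (n → ℝ)) ((WithLp.equiv 2 (n → ℝ)).symm x) := rfl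
    _ = _ := by
      rw [h]
      simp [ev, EuclideanSpace.inner_eq_star_dotProduct, dotProduct_comm]

omit [Fintype m] [DecidableEq n] in
lemma mulVec_sum' {ι : Type*} [Fintype ι] (M : Matrix m n ℝ) (f : ι → n → ℝ) :
    M *ᵥ (∑ i, f i) = ∑ i, M *ᵥ f i := by
  simp only [← Matrix.mulVecLin_apply]
  exact map_sum (Matrix.mulVecLin M) f Finset.univ

end NuclearAux

namespace NuclearAux

variable {m n : Type*} [Fintype m] [Fintype n] [DecidableEq n]

/-- Key duality-type bound: pairing a matrix against Bessel families is at most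
the nuclear norm. -/
lemma key (M : Matrix m n ℝ) (u : n → m → ℝ) (w : n → n → ℝ)
    (hu : ∀ x, ∑ i, (u i ⬝ᵥ x) ^ 2 ≤ x ⬝ᵥ x)
    (hw : ∀ x, ∑ i, (w i ⬝ᵥ x) ^ 2 ≤ x ⬝ᵥ x) :
    ∑ i, u i ⬝ᵥ (M *ᵥ w i) ≤ nuclearNorm M := by
  set lam := (Matrix.isHermitian_transpose_mul_self M).eigenvalues with hlam
  have step1 : ∀ i, u i ⬝ᵥ (M *ᵥ w i) =
      ∑ j, (ev M j ⬝ᵥ w i) * (u i ⬝ᵥ (M *ᵥ ev M j)) := by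
    intro i
    conv_lhs => rw [ev_complete M (w i)]
    rw [mulVec_sum']
    simp only [mulVec_smul]
    rw [dot_sum]
    simp [mul_comm]
  calc ∑ i, u i ⬝ᵥ (M *ᵥ w i)
      = ∑ j, ∑ i, (u i ⬝ᵥ (M *ᵥ ev M j)) * (ev M j ⬝ᵥ w i) := by
        simp only [step1]
        rw [Finset.sum_comm]
        simp [mul_comm]
    _ ≤ ∑ j, Real.sqrt (lam j) := by
        refine Finset.sum_le_sum fun j _ => ?_
        set a : n → ℝ := fun i => u i ⬝ᵥ (M *ᵥ ev M j)
        set b : n → ℝ := fun i => ev M j ⬝ᵥ w i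
        have ha : ∑ i, a i ^ 2 ≤ lam j := by
          have h1 := hu (M *ᵥ ev M j)
          have h2 := mulVec_ev_dot M j j
          rw [if_pos rfl, mul_one] at h2
          rw [h2] at h1
          exact h1
        have hb : ∑ i, b i ^ 2 ≤ 1 := by
          have h1 := hw (ev M j)
          have h2 := ev_dot M j j
          rw [if_pos rfl] at h2
          rw [h2] at h1
          calc ∑ i, b i ^ 2 = ∑ i, (w i ⬝ᵥ ev M j) ^ 2 := by
                simp [b, dotProduct_comm]
            _ ≤ 1 := h1
        have hbnn : (0:ℝ) ≤ ∑ i, b i ^ 2 := Finset.sum_nonneg fun i _ => sq_nonneg _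
        have hann : (0:ℝ) ≤ ∑ i, a i ^ 2 := Finset.sum_nonneg fun i _ => sq_nonneg _
        have hcs : (∑ i, a i * b i) ^ 2 ≤ lam j :=
          calc (∑ i, a i * b i) ^ 2 ≤ (∑ i, a i ^ 2) * ∑ i, b i ^ 2 :=
                Finset.sum_mul_sq_le_sq_mul_sq _ _ _
            _ ≤ lam j * 1 := mul_le_mul ha hb hbnn (le_trans hann ha)
            _ = lam j := mul_one _
        calc ∑ i, a i * b i ≤ |∑ i, a i * b i| := le_abs_self _
          _ = Real.sqrt ((∑ i, a i * b i) ^ 2) := (Real.sqrt_sq_eq_abs _).symm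
          _ ≤ Real.sqrt (lam j) := Real.sqrt_le_sqrt hcs
    _ = nuclearNorm M := rfl

end NuclearAux

open NuclearAux

/-- The nuclear norm satisfies the triangle inequality:
`‖A + B‖_* ≤ ‖A‖_* + ‖B‖_*` for real matrices of the same size. -/
theorem nuclearNorm_add_le {m n : Type*} [Fintype m] [Fintype n] [DecidableEq n]
    (A B : Matrix m n ℝ) :
    nuclearNorm (A + B) ≤ nuclearNorm A + nuclearNorm B := by
  classical
  set M := A + B with hM
  set lam := (Matrix.isHermitian_transpose_mul_self M).eigenvalues with hlam
  have lam_nn : ∀ j, 0 ≤ lam j := fun j =>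
    Matrix.eigenvalues_conjTranspose_mul_self_nonneg M j
  set sig : n → ℝ := fun j => Real.sqrt (lam j) with hsig
  have hsig_sq : ∀ j, sig j ^ 2 = lam j := fun j => Real.sq_sqrt (lam_nn j)
  -- left singular vectors
  set u : n → m → ℝ := fun j => if sig j = 0 then 0 else (sig j)⁻¹ • (M *ᵥ ev M j) with hu
  have hMvMv : ∀ i j, (M *ᵥ ev M i) ⬝ᵥ (M *ᵥ ev M j) = lam j * (if i = j then 1 else 0) :=
    fun i j => mulVec_ev_dot M i j
  have huorth : ∀ i j, i ≠ j → u i ⬝ᵥ u j = 0 := by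
    intro i j hij
    rw [hu]
    by_cases h1 : sig i = 0
    · simp [h1]
    by_cases h2 : sig j = 0
    · simp [h1, h2]
    simp only [if_neg h1, if_neg h2, smul_dotProduct, dotProduct_smul, smul_eq_mul]
    rw [hMvMv i j, if_neg hij]
    ring
  have hunorm : ∀ i, u i ⬝ᵥ u i ≤ 1 := by
    intro i
    rw [hu]
    by_cases h1 : sig i = 0
    · simp [h1]
    simp only [if_neg h1, smul_dotProduct, dotProduct_smul, smul_eq_mul]
    rw [hMvMv i i, if_pos rfl, mul_one, ← hsig_sq i]
    field_simp
    exact le_rfl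
  have hubessel : ∀ x, ∑ i, (u i ⬝ᵥ x) ^ 2 ≤ x ⬝ᵥ x := bessel u huorth hunorm
  have hvorth : ∀ i j, i ≠ j → ev M i ⬝ᵥ ev M j = 0 := by
    intro i j hij; rw [ev_dot, if_neg hij]
  have hvnorm : ∀ i, ev M i ⬝ᵥ ev M i ≤ 1 := by
    intro i; rw [ev_dot, if_pos rfl]
  have hvbessel : ∀ x, ∑ i, (ev M i ⬝ᵥ x) ^ 2 ≤ x ⬝ᵥ x := bessel (ev M) hvorth hvnorm
  have hmain : nuclearNorm M = ∑ i, u i ⬝ᵥ (M *ᵥ ev M i) := by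
    rw [show nuclearNorm M = ∑ i, sig i from rfl]
    refine Finset.sum_congr rfl fun i _ => ?_
    rw [hu]
    by_cases h1 : sig i = 0
    · simp only [if_pos h1, zero_dotProduct]
      exact h1
    · simp only [if_neg h1, smul_dotProduct, smul_eq_mul]
      rw [hMvMv i i, if_pos rfl, mul_one, ← hsig_sq i]
      field_simp
  have hsplit : ∀ i, u i ⬝ᵥ (M *ᵥ ev M i) =
      u i ⬝ᵥ (A *ᵥ ev M i) + u i ⬝ᵥ (B *ᵥ ev M i) := by
    intro i
    rw [hM, Matrix.add_mulVec, dotProduct_add]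
  calc nuclearNorm M = ∑ i, u i ⬝ᵥ (M *ᵥ ev M i) := hmain
    _ = (∑ i, u i ⬝ᵥ (A *ᵥ ev M i)) + ∑ i, u i ⬝ᵥ (B *ᵥ ev M i) := by
        rw [← Finset.sum_add_distrib]
        exact Finset.sum_congr rfl fun i _ => hsplit i
    _ ≤ nuclearNorm A + nuclearNorm B :=
        add_le_add (key A u (ev M) hubessel hvbessel) (key B u (ev M) hubessel hvbessel)
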